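/- For every non-negative integer n, the sum A_n = Σ over triples of non-negative integers (k, l, m) with k + l + m = n of 1/((2k+1)(2l+1)(2m+1)) satisfies A_n ≤ 1. -/

import Mathlib

open Finset

/-- `Hodd s = ∑_{l=0}^{s} 1/(2l+1)`. -/
noncomputable def Hodd (s : ℕ) : ℝ := ∑ l ∈ Finset.range (s + 1), 1 / (2 * (l : ℝ) + 1)

lemma Hodd_nonneg (s : ℕ) : 0 ≤ Hodd s := by
  apply Finset.sum_nonneg; intro i _; positivity

lemma Hodd_zero : Hodd 0 = 1 := by simp [Hodd]

lemma Hodd_le (s : ℕ) (hs : 1 ≤ s) : Hodd s ≤ 2 * (s + 1) / 3 := by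
  induction s, hs using Nat.le_induction with
  | base => norm_num [Hodd, Finset.sum_range_succ]
  | succ s hs ih =>
    have hstep : Hodd (s + 1) = Hodd s + 1 / (2 * ((s : ℝ) + 1) + 1) := by
      rw [Hodd, Finset.sum_range_succ]
      push_cast
      rfl
    have h1 : (1 : ℝ) / (2 * ((s : ℝ) + 1) + 1) ≤ 2 / 3 := by
      rw [div_le_div_iff₀ (by positivity) (by norm_num)]
      have : (0 : ℝ) ≤ (s : ℝ) := Nat.cast_nonneg s
      nlinarith
    rw [hstep]
    push_cast
    nlinarith

/-- The pair sum `∑_{l+m=s} 1/((2l+1)(2m+1)) = Hodd s / (s+1)`. -/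
lemma pair_sum (s : ℕ) :
    ∑ q ∈ Finset.HasAntidiagonal.antidiagonal s, (1 : ℝ) / ((2 * q.1 + 1) * (2 * q.2 + 1))
      = Hodd s / (s + 1) := by
  have key : ∀ q ∈ Finset.HasAntidiagonal.antidiagonal s, (1 : ℝ) / ((2 * q.1 + 1) * (2 * q.2 + 1))
      = (1 / (2 * (s : ℝ) + 2)) * (1 / (2 * q.1 + 1) + 1 / (2 * q.2 + 1)) := by
    intro q hq
    have h := Finset.HasAntidiagonal.mem_antidiagonal.mp hq
    have h' : (q.1 : ℝ) + q.2 = s := by exact_mod_cast congrArg (Nat.cast : ℕ → ℝ) h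
    have ha : (0 : ℝ) < 2 * q.1 + 1 := by positivity
    have hb : (0 : ℝ) < 2 * q.2 + 1 := by positivity
    rw [← h']
    field_simp
    ring
  rw [Finset.sum_congr rfl key, ← Finset.mul_sum, Finset.sum_add_distrib]
  have h1 : ∑ q ∈ Finset.HasAntidiagonal.antidiagonal s, (1 : ℝ) / (2 * q.1 + 1) = Hodd s := by
    rw [Finset.Nat.sum_antidiagonal_eq_sum_range_succ (fun a b => (1 : ℝ) / (2 * a + 1))]
    rfl
  have h2 : ∑ q ∈ Finset.HasAntidiagonal.antidiagonal s, (1 : ℝ) / (2 * q.2 + 1) = Hodd s := by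
    rw [← h1]
    exact Finset.Nat.sum_antidiagonal_swap (f := fun q : ℕ × ℕ => (1 : ℝ) / (2 * q.1 + 1))
  rw [h1, h2]
  have hs1 : (0 : ℝ) < (s : ℝ) + 1 := by positivity
  field_simp
  ring

/-- Triangle reindexing. -/
lemma tri (g : ℕ → ℕ → ℝ) (n : ℕ) :
    ∑ k ∈ Finset.range (n + 1), ∑ l ∈ Finset.range (n + 1 - k), g k l
      = ∑ s ∈ Finset.range (n + 1), ∑ q ∈ Finset.HasAntidiagonal.antidiagonal s, g q.1 q.2 := by
  induction n with
  | zero => simp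
  | succ n ih =>
    rw [Finset.sum_range_succ (fun s => ∑ q ∈ Finset.HasAntidiagonal.antidiagonal s, g q.1 q.2), ← ih]
    rw [Finset.sum_range_succ (fun k => ∑ l ∈ Finset.range (n + 2 - k), g k l)]
    have hlast : ∑ l ∈ Finset.range (n + 2 - (n + 1)), g (n + 1) l = g (n + 1) 0 := by
      have h1 : n + 2 - (n + 1) = 1 := by omega
      rw [h1, Finset.sum_range_one]
    rw [hlast]
    have hmid : ∀ k ∈ Finset.range (n + 1),
        ∑ l ∈ Finset.range (n + 2 - k), g k l
          = (∑ l ∈ Finset.range (n + 1 - k), g k l) + g k (n + 1 - k) := by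
      intro k hk
      have hk' : k ≤ n := Nat.lt_succ_iff.mp (Finset.mem_range.mp hk)
      have : n + 2 - k = (n + 1 - k) + 1 := by omega
      rw [this, Finset.sum_range_succ]
    rw [Finset.sum_congr rfl hmid, Finset.sum_add_distrib]
    have hanti : ∑ q ∈ Finset.HasAntidiagonal.antidiagonal (n + 1), g q.1 q.2
        = ∑ k ∈ Finset.range (n + 2), g k (n + 1 - k) := by
      rw [Finset.Nat.sum_antidiagonal_eq_sum_range_succ (fun a b => g a b)]
    have hsplit : ∑ k ∈ Finset.range (n + 2), g k (n + 1 - k)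
        = (∑ k ∈ Finset.range (n + 1), g k (n + 1 - k)) + g (n + 1) 0 := by
      rw [Finset.sum_range_succ]
      norm_num
    rw [hanti, hsplit]
    ring

/-- For every `n ≥ 0`, the sum `A_n = Σ_{k+l+m=n} 1/((2k+1)(2l+1)(2m+1))` over ordered
triples of non-negative integers satisfies `A_n ≤ 1`. -/
theorem triple_sum_le_one (n : ℕ) :
    ∑ p ∈ Finset.HasAntidiagonal.antidiagonal n, ∑ q ∈ Finset.HasAntidiagonal.antidiagonal p.2,
      (1 : ℝ) / ((2 * p.1 + 1) * (2 * q.1 + 1) * (2 * q.2 + 1)) ≤ 1 := by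
  set A : ℝ := ∑ p ∈ Finset.HasAntidiagonal.antidiagonal n, ∑ q ∈ Finset.HasAntidiagonal.antidiagonal p.2,
      (1 : ℝ) / ((2 * p.1 + 1) * (2 * q.1 + 1) * (2 * q.2 + 1)) with hA
  set C : ℝ := ∑ s ∈ Finset.range (n + 1), Hodd s / (s + 1) with hC
  -- termwise partial fractions
  have key : (2 * (n : ℝ) + 3) * A = 3 * C := by
    have term : ∀ p ∈ Finset.HasAntidiagonal.antidiagonal n, ∀ q ∈ Finset.HasAntidiagonal.antidiagonal p.2,
        (2 * (n : ℝ) + 3) * (1 / ((2 * p.1 + 1) * (2 * q.1 + 1) * (2 * q.2 + 1)))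
          = 1 / ((2 * q.1 + 1) * (2 * q.2 + 1)) + 1 / ((2 * p.1 + 1) * (2 * q.2 + 1))
            + 1 / ((2 * p.1 + 1) * (2 * q.1 + 1)) := by
      intro p hp q hq
      have h1 := Finset.HasAntidiagonal.mem_antidiagonal.mp hp
      have h2 := Finset.HasAntidiagonal.mem_antidiagonal.mp hq
      have hn : (n : ℝ) = (p.1 : ℝ) + q.1 + q.2 := by
        have h3 : p.1 + q.1 + q.2 = n := by omega
        exact_mod_cast h3.symm
      have ha : (0 : ℝ) < 2 * p.1 + 1 := by positivity
      have hb : (0 : ℝ) < 2 * q.1 + 1 := by positivity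
      have hc : (0 : ℝ) < 2 * q.2 + 1 := by positivity
      rw [hn]
      field_simp
      ring
    have expand : (2 * (n : ℝ) + 3) * A
        = (∑ p ∈ Finset.HasAntidiagonal.antidiagonal n, ∑ q ∈ Finset.HasAntidiagonal.antidiagonal p.2,
            (1 : ℝ) / ((2 * q.1 + 1) * (2 * q.2 + 1)))
          + (∑ p ∈ Finset.HasAntidiagonal.antidiagonal n, ∑ q ∈ Finset.HasAntidiagonal.antidiagonal p.2,
            (1 : ℝ) / ((2 * p.1 + 1) * (2 * q.2 + 1)))
          + (∑ p ∈ Finset.HasAntidiagonal.antidiagonal n, ∑ q ∈ Finset.HasAntidiagonal.antidiagonal p.2,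
            (1 : ℝ) / ((2 * p.1 + 1) * (2 * q.1 + 1))) := by
      rw [hA, Finset.mul_sum]
      rw [← Finset.sum_add_distrib, ← Finset.sum_add_distrib]
      apply Finset.sum_congr rfl
      intro p hp
      rw [Finset.mul_sum, ← Finset.sum_add_distrib, ← Finset.sum_add_distrib]
      exact Finset.sum_congr rfl fun q hq => term p hp q hq
    -- S1 = C
    have S1 : ∑ p ∈ Finset.HasAntidiagonal.antidiagonal n, ∑ q ∈ Finset.HasAntidiagonal.antidiagonal p.2,
        (1 : ℝ) / ((2 * q.1 + 1) * (2 * q.2 + 1)) = C := by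
      have : ∀ p ∈ Finset.HasAntidiagonal.antidiagonal n, ∑ q ∈ Finset.HasAntidiagonal.antidiagonal p.2,
          (1 : ℝ) / ((2 * q.1 + 1) * (2 * q.2 + 1)) = Hodd p.2 / (p.2 + 1) :=
        fun p _ => pair_sum p.2
      rw [Finset.sum_congr rfl this,
        Finset.Nat.sum_antidiagonal_eq_sum_range_succ (fun a b => Hodd b / ((b : ℝ) + 1))]
      rw [hC, ← Finset.sum_range_reflect (fun s => Hodd s / ((s : ℝ) + 1)) (n + 1)]
      apply Finset.sum_congr rfl
      intro k hk
      have hk' : k ≤ n := Nat.lt_succ_iff.mp (Finset.mem_range.mp hk)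
      have : n + 1 - 1 - k = n - k := by omega
      rw [this]
    -- S3 = C  (via triangle reindexing)
    have S3 : ∑ p ∈ Finset.HasAntidiagonal.antidiagonal n, ∑ q ∈ Finset.HasAntidiagonal.antidiagonal p.2,
        (1 : ℝ) / ((2 * p.1 + 1) * (2 * q.1 + 1)) = C := by
      have inner : ∀ p : ℕ × ℕ, ∑ q ∈ Finset.HasAntidiagonal.antidiagonal p.2,
          (1 : ℝ) / ((2 * p.1 + 1) * (2 * q.1 + 1))
            = ∑ l ∈ Finset.range (p.2 + 1), (1 : ℝ) / ((2 * p.1 + 1) * (2 * l + 1)) := by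
        intro p
        rw [Finset.Nat.sum_antidiagonal_eq_sum_range_succ
          (fun a b => (1 : ℝ) / ((2 * p.1 + 1) * (2 * a + 1)))]
      calc ∑ p ∈ Finset.HasAntidiagonal.antidiagonal n, ∑ q ∈ Finset.HasAntidiagonal.antidiagonal p.2,
            (1 : ℝ) / ((2 * p.1 + 1) * (2 * q.1 + 1))
          = ∑ k ∈ Finset.range (n + 1), ∑ l ∈ Finset.range (n + 1 - k),
              (1 : ℝ) / ((2 * k + 1) * (2 * l + 1)) := by
            rw [Finset.Nat.sum_antidiagonal_eq_sum_range_succ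
              (fun a b => ∑ q ∈ Finset.HasAntidiagonal.antidiagonal b, (1 : ℝ) / ((2 * a + 1) * (2 * q.1 + 1)))]
            apply Finset.sum_congr rfl
            intro k hk
            have hk' : k ≤ n := Nat.lt_succ_iff.mp (Finset.mem_range.mp hk)
            rw [inner (k, n - k)]
            have : n - k + 1 = n + 1 - k := by omega
            rw [this]
        _ = ∑ s ∈ Finset.range (n + 1), ∑ q ∈ Finset.HasAntidiagonal.antidiagonal s,
              (1 : ℝ) / ((2 * q.1 + 1) * (2 * q.2 + 1)) :=
            tri (fun k l => (1 : ℝ) / ((2 * k + 1) * (2 * l + 1))) n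
        _ = C := by
            rw [hC]; exact Finset.sum_congr rfl fun s _ => pair_sum s
    -- S2 = S3 by swapping the inner antidiagonal
    have S2 : ∑ p ∈ Finset.HasAntidiagonal.antidiagonal n, ∑ q ∈ Finset.HasAntidiagonal.antidiagonal p.2,
        (1 : ℝ) / ((2 * p.1 + 1) * (2 * q.2 + 1)) = C := by
      rw [← S3]
      apply Finset.sum_congr rfl
      intro p _
      rw [← Finset.Nat.sum_antidiagonal_swap
        (f := fun q : ℕ × ℕ => (1 : ℝ) / ((2 * p.1 + 1) * (2 * q.1 + 1)))]
      rfl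
    rw [expand, S1, S2, S3]; ring
  -- bound C ≤ (2n+3)/3
  have hCbound : C ≤ (2 * (n : ℝ) + 3) / 3 := by
    rw [hC, Finset.sum_range_succ' (fun s => Hodd s / ((s : ℝ) + 1))]
    have h0 : Hodd 0 / ((0 : ℕ) + 1 : ℝ) = 1 := by simp [Hodd_zero]
    have hterm : ∀ i ∈ Finset.range n, Hodd (i + 1) / (((i + 1 : ℕ) : ℝ) + 1) ≤ 2 / 3 := by
      intro i _
      have h1 : Hodd (i + 1) ≤ 2 * ((i + 1 : ℕ) + 1 : ℝ) / 3 := by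
        have := Hodd_le (i + 1) (by omega)
        push_cast at this ⊢; linarith
      have h2 : (0 : ℝ) < ((i + 1 : ℕ) : ℝ) + 1 := by positivity
      rw [div_le_iff₀ h2]
      push_cast at h1 ⊢
      nlinarith
    have hsum : ∑ i ∈ Finset.range n, Hodd (i + 1) / (((i + 1 : ℕ) : ℝ) + 1)
        ≤ (n : ℝ) * (2 / 3) := by
      calc ∑ i ∈ Finset.range n, Hodd (i + 1) / (((i + 1 : ℕ) : ℝ) + 1)
          ≤ ∑ _i ∈ Finset.range n, (2 : ℝ) / 3 := Finset.sum_le_sum hterm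
        _ = (n : ℝ) * (2 / 3) := by
            rw [Finset.sum_const, Finset.card_range, nsmul_eq_mul]
    rw [h0]
    linarith
  -- conclude
  have hpos : (0 : ℝ) < 2 * (n : ℝ) + 3 := by positivity
  have : (2 * (n : ℝ) + 3) * A ≤ (2 * (n : ℝ) + 3) * 1 := by
    rw [key, mul_one]; linarith
  exact le_of_mul_le_mul_left this hpos
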